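/- Write e(u) := exp(2π√(−1)·u) for u ∈ ℂ. Let c0, c1, c2, c3, c4, c5 be complex numbers with c0+c1+c2+c3+c4+c5 = 0 and 2c_j ∉ ℤ + 1/2 for j = 0, 1, 2, 3, 4. Define the 4×4 matrix H(−1) by diagonal entries H(−1)_{jj} = (1−e(2c_{j-1}+2c_j))/((1+e(2c_{j-1}))(1+e(2c_j))) for the consecutive pairs (c0,c1), (c1,c2), (c2,c3), (c3,c4); superdiagonal entries H(−1)_{j,j+1} = 1/(1+e(2c_j)); subdiagonal entries H(−1)_{j+1,j} = −e(2c_j)/(1+e(2c_j)) for j = 1, 2, 3; and all other entries 0. Then det H(−1) = (1 + e(−2c5))/((1+e(2c0))(1+e(2c1))(1+e(2c2))(1+e(2c3))(1+e(2c4))). -/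

import Mathlib

open Matrix Complex

lemma ne_neg_one_of_half (c : ℂ) (h : ∀ n : ℤ, 2*c ≠ (n : ℂ) + 1/2) :
    1 + Complex.exp (2*Real.pi*I*(2*c)) ≠ 0 := by
  intro hc
  have he : Complex.exp (2*Real.pi*I*(2*c)) = -1 := by linear_combination hc
  have : Complex.exp (2*Real.pi*I*(2*c) + Real.pi*I) = 1 := by
    rw [Complex.exp_add, he, Complex.exp_pi_mul_I]; ring
  rw [Complex.exp_eq_one_iff] at this
  obtain ⟨n, hn⟩ := this
  apply h (n - 1)
  push_cast
  have hpi : (2*(Real.pi:ℂ)*I) ≠ 0 := by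
    simp [Real.pi_ne_zero, I_ne_zero]
  apply mul_left_cancel₀ hpi
  linear_combination hn

set_option maxHeartbeats 1000000 in
lemma detN (a b c d e : ℂ) :
    (!![1-a*b, 1+a, 0, 0;
        -b*(1+c), 1-b*c, 1+b, 0;
        0, -c*(1+d), 1-c*d, 1+c;
        0, 0, -d*(1+e), 1-d*e]).det
      = (1 + a*b*c*d*e)*(1+b)*(1+c)*(1+d) := by
  simp [Matrix.det_succ_row_zero, Fin.sum_univ_succ, Fin.succAbove]
  ring

lemma aux_frac (A B C D E N : ℂ) (hA : A ≠ 0) (hB : B ≠ 0) (hC : C ≠ 0)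
    (hD : D ≠ 0) (hE : E ≠ 0) :
    (A*B)⁻¹ * (B*C)⁻¹ * (C*D)⁻¹ * (D*E)⁻¹ * (N*B*C*D) = N/(A*B*C*D*E) := by
  rw [← mul_inv, ← mul_inv, ← mul_inv, inv_mul_eq_div,
    div_eq_div_iff
      (by simp [hA, hB, hC, hD, hE, mul_ne_zero])
      (by simp [hA, hB, hC, hD, hE, mul_ne_zero])]
  ring

set_option maxHeartbeats 1000000 in
lemma det4 (a b c d e : ℂ) (ha : 1+a ≠ 0) (hb : 1+b ≠ 0) (hc : 1+c ≠ 0)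
    (hd : 1+d ≠ 0) (he : 1+e ≠ 0) :
    (!![(1-a*b)/((1+a)*(1+b)), 1/(1+b), 0, 0;
        -b/(1+b), (1-b*c)/((1+b)*(1+c)), 1/(1+c), 0;
        0, -c/(1+c), (1-c*d)/((1+c)*(1+d)), 1/(1+d);
        0, 0, -d/(1+d), (1-d*e)/((1+d)*(1+e))]).det
      = (1 + a*b*c*d*e) / ((1+a)*(1+b)*(1+c)*(1+d)*(1+e)) := by
  have hM : (!![(1-a*b)/((1+a)*(1+b)), 1/(1+b), 0, 0;
        -b/(1+b), (1-b*c)/((1+b)*(1+c)), 1/(1+c), 0;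
        0, -c/(1+c), (1-c*d)/((1+c)*(1+d)), 1/(1+d);
        0, 0, -d/(1+d), (1-d*e)/((1+d)*(1+e))])
      = Matrix.diagonal ![((1+a)*(1+b))⁻¹, ((1+b)*(1+c))⁻¹, ((1+c)*(1+d))⁻¹, ((1+d)*(1+e))⁻¹]
        * (!![1-a*b, 1+a, 0, 0;
              -b*(1+c), 1-b*c, 1+b, 0;
              0, -c*(1+d), 1-c*d, 1+c;
              0, 0, -d*(1+e), 1-d*e]) := by
    ext i j
    fin_cases i <;> fin_cases j <;>
      simp only [Matrix.diagonal_mul, Fin.zero_eta, Fin.mk_one, show (⟨2,by norm_num⟩ : Fin 4) = 2 from rfl,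
        show (⟨3,by norm_num⟩ : Fin 4) = 3 from rfl, Matrix.cons_val', Matrix.cons_val_zero,
        Matrix.cons_val_one, Matrix.head_cons, Matrix.empty_val', Matrix.cons_val_fin_one,
        Matrix.head_fin_const, Matrix.cons_val_two, Matrix.cons_val_three, Matrix.tail_cons,
        mul_zero, Matrix.of_apply] <;>
      first
      | rfl
      | (rw [inv_mul_eq_div, div_eq_div_iff (by assumption)
            (mul_ne_zero (by assumption) (by assumption))]; ring)
      | rw [inv_mul_eq_div]
  rw [hM, Matrix.det_mul, Matrix.det_diagonal, detN]
  rw [Fin.prod_univ_four]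
  simp only [Matrix.cons_val_zero, Matrix.cons_val_one, Matrix.head_cons, Matrix.cons_val_two,
    Matrix.tail_cons, Matrix.cons_val_three]
  exact aux_frac (1+a) (1+b) (1+c) (1+d) (1+e) (1+a*b*c*d*e) ha hb hc hd he

theorem det_Hm1 (c0 c1 c2 c3 c4 c5 : ℂ)
    (hsum : c0 + c1 + c2 + c3 + c4 + c5 = 0)
    (h0 : ∀ n : ℤ, 2*c0 ≠ (n : ℂ) + 1/2) (h1 : ∀ n : ℤ, 2*c1 ≠ (n : ℂ) + 1/2)
    (h2 : ∀ n : ℤ, 2*c2 ≠ (n : ℂ) + 1/2) (h3 : ∀ n : ℤ, 2*c3 ≠ (n : ℂ) + 1/2)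
    (h4 : ∀ n : ℤ, 2*c4 ≠ (n : ℂ) + 1/2) :
    (!![(1-exp (2*Real.pi*I*(2*c0+2*c1)))/((1+exp (2*Real.pi*I*(2*c0)))*(1+exp (2*Real.pi*I*(2*c1)))),
        1/(1+exp (2*Real.pi*I*(2*c1))), 0, 0;
        -exp (2*Real.pi*I*(2*c1))/(1+exp (2*Real.pi*I*(2*c1))),
        (1-exp (2*Real.pi*I*(2*c1+2*c2)))/((1+exp (2*Real.pi*I*(2*c1)))*(1+exp (2*Real.pi*I*(2*c2)))),
        1/(1+exp (2*Real.pi*I*(2*c2))), 0;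
        0, -exp (2*Real.pi*I*(2*c2))/(1+exp (2*Real.pi*I*(2*c2))),
        (1-exp (2*Real.pi*I*(2*c2+2*c3)))/((1+exp (2*Real.pi*I*(2*c2)))*(1+exp (2*Real.pi*I*(2*c3)))),
        1/(1+exp (2*Real.pi*I*(2*c3)));
        0, 0, -exp (2*Real.pi*I*(2*c3))/(1+exp (2*Real.pi*I*(2*c3))),
        (1-exp (2*Real.pi*I*(2*c3+2*c4)))/((1+exp (2*Real.pi*I*(2*c3)))*(1+exp (2*Real.pi*I*(2*c4))))]).det
      = (1 + exp (2*Real.pi*I*(-2*c5))) /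
        ((1+exp (2*Real.pi*I*(2*c0)))*(1+exp (2*Real.pi*I*(2*c1)))*(1+exp (2*Real.pi*I*(2*c2)))
          *(1+exp (2*Real.pi*I*(2*c3)))*(1+exp (2*Real.pi*I*(2*c4)))) := by
  have key := det4 (exp (2*Real.pi*I*(2*c0))) (exp (2*Real.pi*I*(2*c1))) (exp (2*Real.pi*I*(2*c2)))
    (exp (2*Real.pi*I*(2*c3))) (exp (2*Real.pi*I*(2*c4)))
    (ne_neg_one_of_half c0 h0) (ne_neg_one_of_half c1 h1) (ne_neg_one_of_half c2 h2)
    (ne_neg_one_of_half c3 h3) (ne_neg_one_of_half c4 h4)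
  have e01 : exp (2*Real.pi*I*(2*c0+2*c1)) = exp (2*Real.pi*I*(2*c0)) * exp (2*Real.pi*I*(2*c1)) := by
    rw [← Complex.exp_add]; ring_nf
  have e12 : exp (2*Real.pi*I*(2*c1+2*c2)) = exp (2*Real.pi*I*(2*c1)) * exp (2*Real.pi*I*(2*c2)) := by
    rw [← Complex.exp_add]; ring_nf
  have e23 : exp (2*Real.pi*I*(2*c2+2*c3)) = exp (2*Real.pi*I*(2*c2)) * exp (2*Real.pi*I*(2*c3)) := by
    rw [← Complex.exp_add]; ring_nf
  have e34 : exp (2*Real.pi*I*(2*c3+2*c4)) = exp (2*Real.pi*I*(2*c3)) * exp (2*Real.pi*I*(2*c4)) := by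
    rw [← Complex.exp_add]; ring_nf
  have e5 : exp (2*Real.pi*I*(-2*c5)) = exp (2*Real.pi*I*(2*c0)) * exp (2*Real.pi*I*(2*c1))
      * exp (2*Real.pi*I*(2*c2)) * exp (2*Real.pi*I*(2*c3)) * exp (2*Real.pi*I*(2*c4)) := by
    rw [← Complex.exp_add, ← Complex.exp_add, ← Complex.exp_add, ← Complex.exp_add]
    congr 1
    linear_combination (-4*(Real.pi:ℂ)*I) * hsum
  rw [e01, e12, e23, e34, e5]
  exact key
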